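/- There exists an infinite symmetric set A ⊆ ℤ (i.e., A = -A) satisfying property P(h) whose counting function satisfies |A ∩ [-x,x]| ≥ c·x^{1/(2h-1)} for some constant c > 0 and all x ≥ 1; this can be achieved by the greedy construction where a_n is the smallest integer exceeding a_{n-1} such that {−a_n, a_{−(n−1)},...,a_{n−1}, a_n} satisfies P(h), and at each step a_n ≤ (n−1)^{2h−1} + 1. -/

import Mathlib

/-- `s` is a representation of `D` as a sum of `h` elements of `A` (as a multiset). -/
def IsRep (A : Set ℤ) (h : ℕ) (D : ℤ) (s : Multiset ℤ) : Prop :=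
  Multiset.card s = h ∧ (∀ x ∈ s, x ∈ A) ∧ s.sum = D

/-- A core multiset for property `P(h)`: at most `h` elements of `A`, with the same
parity of cardinality as `h`, and with `aᵢ ≠ -aⱼ` for `i ≠ j`. -/
def IsCore (A : Set ℤ) (h : ℕ) (c : Multiset ℤ) : Prop :=
  Multiset.card c ≤ h ∧ Multiset.card c % 2 = h % 2 ∧ (∀ x ∈ c, x ∈ A) ∧
    ∀ x ∈ c, -x ∉ c.erase x

/-- `s` is, up to permutation, the core `c` together with cancelling pairs `(u, -u)`
with `u ∈ A ∩ (-A)`. -/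
def MatchesCore (A : Set ℤ) (c s : Multiset ℤ) : Prop :=
  ∃ p : Multiset ℤ, (∀ u ∈ p, u ∈ A ∧ -u ∈ A) ∧ s = c + p + p.map (fun u => -u)

/-- Property `P(h)`: every `D` in the `h`-fold sumset of `A` has a unique core, such that
every representation of `D` as a sum of `h` elements of `A` is a permutation of the core
together with cancelling pairs `(u, -u)`, `u ∈ A ∩ (-A)`. -/
def PropertyP (A : Set ℤ) (h : ℕ) : Prop :=
  ∀ D : ℤ, (∃ s, IsRep A h D s) →
    ∃! c : Multiset ℤ, IsCore A h c ∧ ∀ s, IsRep A h D s → MatchesCore A c s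

/-- `S` is a `B_h`-set: any two `h`-tuples of elements of `S` with equal sums are
permutations of each other. -/
def IsBhSet (S : Set ℤ) (h : ℕ) : Prop :=
  ∀ s t : Multiset ℤ, Multiset.card s = h → Multiset.card t = h →
    (∀ x ∈ s, x ∈ S) → (∀ x ∈ t, x ∈ S) → s.sum = t.sum → s = t

namespace S16

/-- All signed zero-sum combinations of at most `2h` elements of `±S` cancel in pairs. -/
def Free (h : ℕ) (S : Set ℤ) : Prop :=
  ∀ m : Multiset ℤ, Multiset.card m ≤ 2 * h → (∀ x ∈ m, x ∈ S ∨ -x ∈ S) → m.sum = 0 →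
    ∀ b : ℤ, m.count b = m.count (-b)

lemma free_mono {h : ℕ} {S S' : Set ℤ} (hss : S ⊆ S') (hf : Free h S') : Free h S :=
  fun m hc hm hs => hf m hc (fun x hx => (hm x hx).imp (@hss x) (@hss (-x))) hs

lemma free_empty (h : ℕ) : Free h (∅ : Set ℤ) := by
  intro m hc hm hs b
  have : m = 0 := Multiset.eq_zero_of_forall_notMem fun x hx => by simpa using hm x hx
  simp [this]

lemma abs_sum_le (m : Multiset ℤ) (M : ℤ) (hm : ∀ x ∈ m, |x| ≤ M) :
    |m.sum| ≤ (Multiset.card m : ℤ) * M := by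
  induction m using Multiset.induction with
  | empty => simp
  | cons a t ih =>
    have h1 : |a| ≤ M := hm a (Multiset.mem_cons_self a t)
    have h2 : |t.sum| ≤ (Multiset.card t : ℤ) * M := ih fun x hx => hm x (Multiset.mem_cons_of_mem hx)
    have := abs_add_le a t.sum
    simp only [Multiset.sum_cons, Multiset.card_cons]
    push_cast
    nlinarith [abs_nonneg a]

/-- decomposition of a multiset into its `±z` part and the rest -/
lemma split_pm (m : Multiset ℤ) (z : ℤ) (hz : z ≠ -z) :
    m = m.filter (fun x => x ≠ z ∧ x ≠ -z) +
      (Multiset.replicate (m.count z) z + Multiset.replicate (m.count (-z)) (-z)) := by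
  classical
  ext b
  simp only [Multiset.count_add, Multiset.count_filter, Multiset.count_replicate]
  by_cases hb1 : b = z
  · subst hb1; simp [hz, Ne.symm hz]
  · by_cases hb2 : b = -z
    · subst hb2; simp [hz, Ne.symm hz, hb1]
    · simp [hb1, hb2, Ne.symm hb1, Ne.symm hb2]

/-- If `z` is positive, `S` is `h`-free with positive elements, and inserting `z` destroys
freeness, we get a nontrivial relation `j * z + m.sum = 0` with small data from `±S`. -/
lemma exists_witness {h : ℕ} {S : Set ℤ} {z : ℤ} (hS : Free h S) (hz : 0 < z)
    (hbad : ¬ Free h (insert z S)) :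
    ∃ (j : ℤ) (m : Multiset ℤ), j ≠ 0 ∧ j.natAbs ≤ 2 * h ∧ Multiset.card m + 1 ≤ 2 * h ∧
      (∀ x ∈ m, x ∈ S ∨ -x ∈ S) ∧ j * z + m.sum = 0 := by
  classical
  simp only [Free, not_forall] at hbad
  obtain ⟨m, hc, hmem, hsum, b, hb⟩ := hbad
  have hzz : z ≠ -z := by omega
  set p := m.count z with hp
  set q := m.count (-z) with hq
  set m' := m.filter (fun x => x ≠ z ∧ x ≠ -z) with hm'
  have hsplit := split_pm m z hzz
  have hmem' : ∀ x ∈ m', x ∈ S ∨ -x ∈ S := by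
    intro x hx
    rw [hm', Multiset.mem_filter] at hx
    obtain ⟨hx1, hx2⟩ := hx
    rcases hmem x hx1 with h1 | h1
    · rcases h1 with h1 | h1
      · exact absurd h1 hx2.1
      · exact Or.inl h1
    · rcases h1 with h1 | h1
      · exact absurd (by omega : x = -z) hx2.2
      · exact Or.inr h1
  have hcard' : Multiset.card m' + p + q = Multiset.card m := by
    conv_rhs => rw [hsplit, ← hm']
    rw [Multiset.card_add, Multiset.card_add, Multiset.card_replicate, Multiset.card_replicate]
    omega
  have hsum' : m'.sum + (p : ℤ) * z + (q : ℤ) * (-z) = m.sum := by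
    conv_rhs => rw [hsplit, ← hm']
    rw [Multiset.sum_add, Multiset.sum_add, Multiset.sum_replicate, Multiset.sum_replicate,
      nsmul_eq_mul, nsmul_eq_mul]
    ring
  have hcount' : ∀ y : ℤ, y ≠ z → y ≠ -z → m.count y = m'.count y := by
    intro y h1 h2
    conv_lhs => rw [hsplit, ← hm']
    simp [Multiset.count_replicate, h1, h2, Ne.symm h1, Ne.symm h2]
  -- p ≠ q
  have hpq : p ≠ q := by
    intro he
    apply hb
    have hsum'' : m'.sum = 0 := by rw [he] at hsum'; rw [hsum] at hsum'; push_cast at hsum' ⊢; linarith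
    have hfree' := hS m' (by omega) hmem' hsum''
    by_cases hb1 : b = z
    · subst hb1; rw [← hp, ← hq, he]
    · by_cases hb2 : b = -z
      · subst hb2; rw [neg_neg, ← hp, ← hq, he]
      · rw [hcount' b hb1 hb2, hcount' (-b) (by intro hc2; apply hb2; omega) (by intro hc2; apply hb1; omega)]
        exact hfree' b
  refine ⟨(p : ℤ) - q, m', by omega, ?_, by omega, hmem', ?_⟩
  · have : ((p:ℤ) - q).natAbs ≤ p + q := by omega
    have : p + q ≤ Multiset.card m := by omega
    omega
  · rw [hsum] at hsum'; linarith [hsum']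

lemma free_insert_of_large {h : ℕ} {S : Set ℤ} {M z : ℤ} (hS : Free h S) (hM : 0 ≤ M)
    (hb : ∀ y ∈ S, 0 < y ∧ y ≤ M) (hz : 2 * (h : ℤ) * M < z) : Free h (insert z S) := by
  by_contra hbad
  have hz0 : 0 < z := by nlinarith
  obtain ⟨j, m, hj0, hjle, hcm, hmem, hrel⟩ := exists_witness hS hz0 hbad
  have habs : ∀ x ∈ m, |x| ≤ M := by
    intro x hx
    rcases hmem x hx with h1 | h1
    · have := hb x h1; rw [abs_le]; omega
    · have := hb (-x) h1; rw [abs_le]; omega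
  have h1 := abs_sum_le m M habs
  have h2 : |j * z| ≤ (Multiset.card m : ℤ) * M := by
    rw [(by linarith : j * z = -m.sum), abs_neg]; exact h1
  have h3 : z ≤ |j * z| := by
    rw [abs_mul, abs_of_pos hz0]
    have : 1 ≤ |j| := Int.one_le_abs hj0
    nlinarith
  have h4 : (Multiset.card m : ℤ) * M ≤ 2 * (h:ℤ) * M := by
    have : (Multiset.card m : ℤ) ≤ 2 * (h:ℤ) := by exact_mod_cast (by omega : Multiset.card m ≤ 2*h)
    nlinarith
  linarith

def GoodP (h : ℕ) (S : Finset ℤ) (z : ℤ) : Prop :=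
  0 < z ∧ (∀ y ∈ S, y < z) ∧ Free h (insert z ↑S)

lemma goodP_nonempty {h : ℕ} {S : Finset ℤ} (hS : Free h ↑S) (hpos : ∀ y ∈ S, 0 < y) :
    ∃ z, GoodP h S z := by
  classical
  set M : ℤ := S.sum id with hMdef
  have hM : 0 ≤ M := Finset.sum_nonneg fun y hy => le_of_lt (hpos y hy)
  have hle : ∀ y ∈ S, y ≤ M := fun y hy =>
    Finset.single_le_sum (f := id) (fun i hi => le_of_lt (hpos i hi)) hy
  refine ⟨2 * (h:ℤ) * M + M + 1, by positivity, fun y hy => ?_, ?_⟩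
  · have h1 := hle y hy
    have h2 : (0:ℤ) ≤ 2 * (h:ℤ) * M := by positivity
    omega
  · exact free_insert_of_large hS hM (fun y hy => ⟨hpos y hy, hle y hy⟩)
      (by have h2 : (0:ℤ) ≤ M := hM; omega)

open scoped Classical in
noncomputable def step (h : ℕ) (S : Finset ℤ) : ℤ :=
  if H : ∃ z, GoodP h S z then
    (Int.exists_least_of_bdd ⟨1, fun z hz => hz.1⟩ H).choose
  else 1

lemma step_spec {h : ℕ} {S : Finset ℤ} (H : ∃ z, GoodP h S z) :
    GoodP h S (step h S) ∧ ∀ z, GoodP h S z → step h S ≤ z := by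
  rw [step, dif_pos H]

  exact (Int.exists_least_of_bdd ⟨1, fun z hz => hz.1⟩ H).choose_spec

noncomputable def B (h : ℕ) : ℕ → Finset ℤ
  | 0 => ∅
  | n + 1 => insert (step h (B h n)) (B h n)

noncomputable def a (h : ℕ) (n : ℕ) : ℤ := step h (B h n)

lemma inv (h : ℕ) : ∀ n, Free h ↑(B h n) ∧ ∀ y ∈ B h n, 0 < y := by
  intro n
  induction n with
  | zero => exact ⟨by simpa [B] using free_empty h, by simp [B]⟩
  | succ n ih =>
    have H := goodP_nonempty ih.1 ih.2
    have hs := (step_spec H).1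
    constructor
    · rw [B]; rw [Finset.coe_insert]; exact hs.2.2
    · intro y hy
      rw [B, Finset.mem_insert] at hy
      rcases hy with rfl | hy
      · exact hs.1
      · exact ih.2 y hy

lemma a_good (h : ℕ) (n : ℕ) :
    GoodP h (B h n) (a h n) ∧ ∀ z, GoodP h (B h n) z → a h n ≤ z :=
  step_spec (goodP_nonempty (inv h n).1 (inv h n).2)

lemma a_pos (h : ℕ) (n : ℕ) : 0 < a h n := (a_good h n).1.1

lemma lt_a_of_mem (h : ℕ) {n : ℕ} {y : ℤ} (hy : y ∈ B h n) : y < a h n := (a_good h n).1.2.1 y hy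

lemma a_mem_B_succ (h : ℕ) (n : ℕ) : a h n ∈ B h (n + 1) := by
  rw [B]; exact Finset.mem_insert_self _ _

lemma B_mono (h : ℕ) : Monotone (B h) := by
  apply monotone_nat_of_le_succ
  intro n
  rw [show B h (n+1) = insert (step h (B h n)) (B h n) from rfl]
  exact Finset.subset_insert _ _

lemma a_strict (h : ℕ) : StrictMono (a h) := by
  apply strictMono_nat_of_lt_succ
  intro n
  exact lt_a_of_mem h (a_mem_B_succ h n)

lemma mem_B_iff (h : ℕ) {n k : ℕ} : a h k ∈ B h n ↔ k < n := by
  constructor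
  · intro hk
    by_contra hc
    have : B h n ⊆ B h k := B_mono h (by omega)
    exact absurd (lt_a_of_mem h (this hk)) (lt_irrefl _)
  · intro hk
    exact B_mono h hk (a_mem_B_succ h k)

lemma B_eq_image (h : ℕ) (n : ℕ) : B h n = (Finset.range n).image (a h) := by
  induction n with
  | zero => simp [B]
  | succ n ih => rw [B, Finset.range_add_one, Finset.image_insert, ← ih]; rfl

lemma card_B (h : ℕ) (n : ℕ) : (B h n).card = n := by
  rw [B_eq_image]
  rw [Finset.card_image_of_injective _ (a_strict h).injective, Finset.card_range]

lemma a_zero (h : ℕ) : a h 0 = 1 := by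
  have hgood : GoodP h (∅ : Finset ℤ) 1 := by
    refine ⟨one_pos, by simp, ?_⟩
    intro m hc hmem hsum b
    have hsplit := split_pm m 1 (by omega)
    have hm' : m.filter (fun x => x ≠ 1 ∧ x ≠ -1) = 0 := by
      rw [Multiset.filter_eq_nil]
      intro x hx hx2
      rcases hmem x hx with h1 | h1 <;> simp at h1 <;> omega
    rw [hm', zero_add] at hsplit
    have hsum2 : (m.count 1 : ℤ) * 1 + (m.count (-1) : ℤ) * (-1) = 0 := by
      rw [hsplit] at hsum
      rw [Multiset.sum_add, Multiset.sum_replicate, Multiset.sum_replicate, nsmul_eq_mul, nsmul_eq_mul] at hsum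
      linarith [hsum]
    have he : m.count 1 = m.count (-1) := by omega
    by_cases hb1 : b = 1
    · subst hb1; exact he
    · by_cases hb2 : b = -1
      · subst hb2; rw [neg_neg]; exact he.symm
      · have c1 : m.count b = 0 := by
          rw [Multiset.count_eq_zero]
          intro hmem2
          rcases hmem b hmem2 with h1 | h1 <;> simp at h1 <;> omega
        have c2 : m.count (-b) = 0 := by
          rw [Multiset.count_eq_zero]
          intro hmem2
          rcases hmem (-b) hmem2 with h1 | h1 <;> simp at h1 <;> omega
        rw [c1, c2]
  have h1 := (a_good h 0).2 1 (by simpa [B] using hgood)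
  have h2 := a_pos h 0
  omega

lemma bad_of_skipped (h : ℕ) :
    ∀ n, ∀ z : ℤ, 0 < z → z ≤ a h n → z ∉ B h (n + 1) → ¬ Free h (insert z ↑(B h n)) := by
  intro n
  induction n with
  | zero =>
    intro z h1 h2 h3
    rw [a_zero] at h2
    exfalso
    apply h3
    have : z = 1 := by omega
    rw [this, ← a_zero h]
    exact a_mem_B_succ h 0
  | succ n ih =>
    intro z h1 h2 h3
    by_cases hz : z ≤ a h n
    · by_cases hzB : z ∈ B h (n + 1)
      · -- z = a h n? z ∈ B (n+1) ⊆ B (n+2), contradiction with h3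
        exact absurd (B_mono h (Nat.le_succ _) hzB) h3
      · have hbad := ih z h1 hz hzB
        intro hfree
        apply hbad
        exact free_mono (Set.insert_subset_insert (by exact_mod_cast B_mono h (Nat.le_succ n))) hfree
    · -- a h n < z ≤ a h (n+1) and z ∉ B (n+2)
      intro hfree
      have hgood : GoodP h (B h (n+1)) z := by
        refine ⟨h1, ?_, hfree⟩
        intro y hy
        rw [show B h (n+1) = insert (step h (B h n)) (B h n) from rfl, Finset.mem_insert] at hy
        rcases hy with rfl | hy
        · have : a h n = step h (B h n) := rfl
          omega
        · have := lt_a_of_mem h hy; omega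
      have hle := (a_good h (n+1)).2 z hgood
      have : z = a h (n+1) := le_antisymm h2 hle
      exact h3 (this ▸ a_mem_B_succ h (n+1))

/-- alphabet: `0` together with `±(B h n)` -/
noncomputable def E (h n : ℕ) : Finset ℤ :=
  insert 0 ((B h n) ∪ (B h n).image (fun y => -y))

lemma card_E (h n : ℕ) : (E h n).card ≤ 2 * n + 1 := by
  classical
  calc (E h n).card ≤ ((B h n) ∪ (B h n).image (fun y => -y)).card + 1 := Finset.card_insert_le _ _
    _ ≤ (B h n).card + ((B h n).image (fun y => -y)).card + 1 := by
        have := Finset.card_union_le (B h n) ((B h n).image (fun y => -y)); omega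
    _ ≤ (B h n).card + (B h n).card + 1 := by have := Finset.card_image_le (s := B h n) (f := fun y => -y); omega
    _ = 2 * n + 1 := by rw [card_B]; ring

lemma sum_getD (l : List ℤ) (K : ℕ) (hl : l.length ≤ K) :
    ∑ i : Fin K, l.getD i 0 = l.sum := by
  induction l generalizing K with
  | nil => simp
  | cons x t ih =>
    obtain ⟨K', rfl⟩ : ∃ K', K = K' + 1 := ⟨K - 1, by simp at hl; omega⟩
    rw [Fin.sum_univ_succ]
    simp only [Fin.val_succ, Fin.val_zero, List.getD_cons_zero, List.getD_cons_succ,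
      List.sum_cons]
    rw [ih K' (by simpa using hl)]

/-- The finset of all sums of at most `2h-1` elements of `±(B h n)`. -/
noncomputable def Wfin (h n : ℕ) : Finset ℤ :=
  (Fintype.piFinset (fun _ : Fin (2 * h - 1) => E h n)).image fun f => ∑ i, f i

lemma card_Wfin (h n : ℕ) : (Wfin h n).card ≤ (2 * n + 1) ^ (2 * h - 1) := by
  classical
  calc (Wfin h n).card ≤ (Fintype.piFinset (fun _ : Fin (2 * h - 1) => E h n)).card :=
        Finset.card_image_le
    _ = ∏ _i : Fin (2 * h - 1), (E h n).card := Fintype.card_piFinset _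
    _ ≤ ∏ _i : Fin (2 * h - 1), (2 * n + 1) := Finset.prod_le_prod (by intros; positivity)
        (fun i _ => card_E h n)
    _ = (2 * n + 1) ^ (2 * h - 1) := by rw [Finset.prod_const]; simp

lemma sum_mem_Wfin (h n : ℕ) (m : Multiset ℤ) (hc : Multiset.card m + 1 ≤ 2 * h)
    (hmem : ∀ x ∈ m, x ∈ (B h n : Set ℤ) ∨ -x ∈ (B h n : Set ℤ)) : m.sum ∈ Wfin h n := by
  classical
  set l : List ℤ := m.toList with hl
  have hlen : l.length ≤ 2 * h - 1 := by
    rw [hl, Multiset.length_toList]; omega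
  rw [Wfin, Finset.mem_image]
  refine ⟨fun i => l.getD i 0, ?_, ?_⟩
  · rw [Fintype.mem_piFinset]
    intro i
    by_cases hi : (i : ℕ) < l.length
    · have hget : l.getD i 0 = l.get ⟨i, hi⟩ := List.getD_eq_get l 0 ⟨i, hi⟩
      have hmem2 : l.get ⟨i, hi⟩ ∈ m := by
        rw [← Multiset.mem_toList, ← hl]; exact List.get_mem l _
      rcases hmem _ hmem2 with h1 | h1
      · rw [hget]; exact Finset.mem_insert_of_mem (Finset.mem_union_left _ (by exact_mod_cast h1))
      · rw [hget]
        refine Finset.mem_insert_of_mem (Finset.mem_union_right _ ?_)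
        rw [Finset.mem_image]
        exact ⟨-(l.get ⟨i, hi⟩), by exact_mod_cast h1, by ring⟩
    · rw [List.getD_eq_default l 0 (by omega)]
      exact Finset.mem_insert_self _ _
  · rw [sum_getD l _ hlen, hl, Multiset.sum_toList]

lemma card_bad (h n : ℕ) :
    ((Finset.Icc 1 (a h n)).filter (fun z => z ∉ B h (n + 1))).card ≤
      (4 * h + 1) * (2 * n + 1) ^ (2 * h - 1) := by
  classical
  set Bad := (Finset.Icc 1 (a h n)).filter (fun z => z ∉ B h (n + 1)) with hBad
  -- witness property
  have hw : ∀ z ∈ Bad, ∃ p : ℤ × ℤ, p.1 ≠ 0 ∧ p.1.natAbs ≤ 2 * h ∧ p.1 * z + p.2 = 0 ∧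
      p.2 ∈ Wfin h n := by
    intro z hz
    rw [hBad, Finset.mem_filter, Finset.mem_Icc] at hz
    have hbad := bad_of_skipped h n z (by omega) hz.1.2 hz.2
    obtain ⟨j, m, hj0, hjle, hcm, hmem, hrel⟩ := exists_witness (inv h n).1 (by omega : (0:ℤ) < z) hbad
    exact ⟨(j, m.sum), hj0, hjle, hrel, sum_mem_Wfin h n m hcm hmem⟩
  -- injection into Icc × Wfin
  have hcard : Bad.card ≤ ((Finset.Icc (-(2*(h:ℤ))) (2*(h:ℤ))) ×ˢ Wfin h n).card := by
    apply Finset.card_le_card_of_injOn (fun z => if hz : ∃ p : ℤ × ℤ, p.1 ≠ 0 ∧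
        p.1.natAbs ≤ 2 * h ∧ p.1 * z + p.2 = 0 ∧ p.2 ∈ Wfin h n then hz.choose else 0)
    · intro z hz
      simp only [Finset.mem_coe]
      rw [dif_pos (hw z hz)]
      obtain ⟨h1, h2, h3, h4⟩ := (hw z hz).choose_spec
      rw [Finset.mem_product]
      constructor
      · rw [Finset.mem_Icc]; omega
      · exact h4
    · intro z1 hz1 z2 hz2 heq
      replace hz1 : z1 ∈ Bad := by exact_mod_cast hz1
      replace hz2 : z2 ∈ Bad := by exact_mod_cast hz2
      dsimp only at heq
      rw [dif_pos (hw z1 hz1), dif_pos (hw z2 hz2)] at heq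
      obtain ⟨h11, h12, h13, h14⟩ := (hw z1 hz1).choose_spec
      obtain ⟨h21, h22, h23, h24⟩ := (hw z2 hz2).choose_spec
      rw [heq] at h13
      have := h23
      have hj := h21
      -- h13 : p.1 * z1 + p.2 = 0, h23 : p.1 * z2 + p.2 = 0 where p = choose z2
      have : (hw z2 hz2).choose.1 * z1 = (hw z2 hz2).choose.1 * z2 := by linarith
      exact mul_left_cancel₀ hj this
  have hc2 : ((Finset.Icc (-(2*(h:ℤ))) (2*(h:ℤ))) ×ˢ Wfin h n).card ≤
      (4 * h + 1) * (2 * n + 1) ^ (2 * h - 1) := by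
    rw [Finset.card_product]
    have h1 : (Finset.Icc (-(2*(h:ℤ))) (2*(h:ℤ))).card = 4 * h + 1 := by
      rw [Int.card_Icc]
      simp
      omega
    rw [h1]
    exact Nat.mul_le_mul_left _ (card_Wfin h n)
  omega

lemma a_bound (h n : ℕ) : a h n ≤ (n : ℤ) + 1 + (4 * h + 1) * (2 * n + 1) ^ (2 * h - 1) := by
  classical
  have hsplit : (Finset.Icc 1 (a h n)).card =
      ((Finset.Icc 1 (a h n)).filter (fun z => z ∉ B h (n + 1))).card +
      ((Finset.Icc 1 (a h n)).filter (fun z => ¬ z ∉ B h (n + 1))).card := by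
    rw [Finset.card_filter_add_card_filter_not]
  have h1 : ((Finset.Icc 1 (a h n)).filter (fun z => ¬ z ∉ B h (n + 1))).card ≤ n + 1 := by
    calc ((Finset.Icc 1 (a h n)).filter (fun z => ¬ z ∉ B h (n + 1))).card
        ≤ (B h (n+1)).card := by
          apply Finset.card_le_card
          intro z hz
          rw [Finset.mem_filter] at hz
          exact not_not.mp hz.2
      _ = n + 1 := card_B h (n+1)
  have h2 := card_bad h n
  have h3 : (Finset.Icc 1 (a h n)).card = (a h n).toNat := by
    rw [Int.card_Icc]
    omega
  have h4 := a_pos h n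
  have := hsplit
  rw [h3] at this
  have h5 : (a h n).toNat ≤ (n + 1) + (4 * h + 1) * (2 * n + 1) ^ (2 * h - 1) := by omega
  have := (Int.toNat_of_nonneg (le_of_lt h4)).symm
  rw [this]
  exact_mod_cast h5

/-- The canonical reduction: remove cancelling pairs. -/
noncomputable def red (s : Multiset ℤ) : Multiset ℤ := s - s.map (fun u => -u)

lemma count_map_neg (s : Multiset ℤ) (b : ℤ) :
    (s.map (fun u => -u)).count b = s.count (-b) := by
  classical
  have : b = (fun u : ℤ => -u) (-b) := by simp
  rw [this]
  rw [Multiset.count_map_eq_count' _ _ (fun x y hxy => by simpa using hxy)]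
  simp

lemma count_red (s : Multiset ℤ) (b : ℤ) : (red s).count b = s.count b - s.count (-b) := by
  classical
  rw [red, Multiset.count_sub, count_map_neg]

section Main

variable {T : Set ℤ} {h : ℕ}

/-- the symmetric set generated by a positive set `T` -/
def symSet (T : Set ℤ) : Set ℤ := {x | x ∈ T ∨ -x ∈ T}

lemma symSet_neg {x : ℤ} (hx : x ∈ symSet T) : -x ∈ symSet T := by
  rcases hx with h1 | h1
  · exact Or.inr (by simpa using h1)
  · exact Or.inl h1

lemma zero_not_mem_symSet (hTpos : ∀ y ∈ T, 0 < y) : (0 : ℤ) ∉ symSet T := by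
  intro hc
  rcases hc with h1 | h1
  · exact absurd (hTpos 0 h1) (by omega)
  · rw [neg_zero] at h1; exact absurd (hTpos 0 h1) (by omega)

lemma count_zero_rep {s : Multiset ℤ} (hTpos : ∀ y ∈ T, 0 < y)
    (hs : ∀ x ∈ s, x ∈ symSet T) : s.count 0 = 0 := by
  rw [Multiset.count_eq_zero]
  intro hc
  exact zero_not_mem_symSet hTpos (hs 0 hc)

/-- every multiset over `symSet T` matches its own reduction -/
lemma matches_red {s : Multiset ℤ} (hTpos : ∀ y ∈ T, 0 < y)
    (hs : ∀ x ∈ s, x ∈ symSet T) : MatchesCore (symSet T) (red s) s := by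
  classical
  set p := (s.filter (fun x => 0 < x)) ∩ (s.map (fun u => -u)) with hp
  have hcount : ∀ b : ℤ, p.count b = if 0 < b then min (s.count b) (s.count (-b)) else 0 := by
    intro b
    rw [hp, Multiset.count_inter, Multiset.count_filter, count_map_neg]
    by_cases hb : 0 < b
    · simp [hb, min_comm]
    · simp [hb]
  refine ⟨p, ?_, ?_⟩
  · intro u hu
    have hu1 : u ∈ s := by
      rw [hp] at hu
      exact Multiset.mem_of_mem_filter (Multiset.mem_of_le (Multiset.inter_le_left) hu)
    exact ⟨hs u hu1, symSet_neg (hs u hu1)⟩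
  · ext b
    rw [Multiset.count_add, Multiset.count_add, count_red, hcount, count_map_neg, hcount]
    have h0 : s.count 0 = 0 := count_zero_rep hTpos hs
    rcases lt_trichotomy 0 b with hb | hb | hb
    · rw [if_pos hb, if_neg (by omega)]
      omega
    · subst hb
      simp [h0]
    · rw [if_neg (by omega), if_pos (by omega), neg_neg]
      omega

/-- a core matching `s` must be the reduction of `s` -/
lemma core_eq_red {c s : Multiset ℤ} (hTpos : ∀ y ∈ T, 0 < y)
    (hcore : IsCore (symSet T) h c) (hm : MatchesCore (symSet T) c s) : c = red s := by
  classical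
  obtain ⟨hc1, hc2, hc3, hc4⟩ := hcore
  obtain ⟨p, hp1, hp2⟩ := hm
  have hkey : ∀ b : ℤ, s.count b = c.count b + (p.count b + p.count (-b)) := by
    intro b
    rw [hp2, Multiset.count_add, Multiset.count_add, count_map_neg]
    ring
  have hczero : c.count 0 = 0 := by
    rw [Multiset.count_eq_zero]
    intro hc
    exact zero_not_mem_symSet hTpos (hc3 0 hc)
  ext b
  rw [count_red, hkey b, hkey (-b), neg_neg]
  by_cases hb0 : b = 0
  · subst hb0; simp [hczero]
  · -- not both c.count b and c.count (-b) positive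
    have : c.count b = 0 ∨ c.count (-b) = 0 := by
      by_contra hcon
      push_neg at hcon
      have hb1 : b ∈ c := by rw [← Multiset.count_pos]; omega
      have hb2 : -b ∈ c.erase b := by
        rw [← Multiset.count_pos, Multiset.count_erase_of_ne (by omega)]
        omega
      exact hc4 b hb1 hb2
    omega

lemma rep_red_eq {s t : Multiset ℤ} {D : ℤ} (hfree : Free h T)
    (hs : IsRep (symSet T) h D s) (ht : IsRep (symSet T) h D t) : red s = red t := by
  classical
  obtain ⟨hs1, hs2, hs3⟩ := hs
  obtain ⟨ht1, ht2, ht3⟩ := ht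
  set m := s + t.map (fun u => -u) with hm
  have hc : Multiset.card m = 2 * h := by
    rw [hm, Multiset.card_add, Multiset.card_map, hs1, ht1]; ring
  have hmem : ∀ x ∈ m, x ∈ T ∨ -x ∈ T := by
    intro x hx
    rw [hm, Multiset.mem_add] at hx
    rcases hx with hx | hx
    · exact hs2 x hx
    · rw [Multiset.mem_map] at hx
      obtain ⟨y, hy, rfl⟩ := hx
      rcases ht2 y hy with h1 | h1
      · exact Or.inr (by simpa using h1)
      · exact Or.inl h1
  have hsum : m.sum = 0 := by
    rw [hm, Multiset.sum_add]
    have : (t.map (fun u => -u)).sum = -t.sum := by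
      simpa using Multiset.sum_map_neg (m := t) (f := id)
    rw [this, hs3, ht3]; ring
  have hfr := hfree m (le_of_eq hc) hmem hsum
  ext b
  have h1 := hfr b
  rw [hm, Multiset.count_add, Multiset.count_add, count_map_neg, count_map_neg, neg_neg] at h1
  rw [count_red, count_red]
  omega

theorem propertyP_of_free (hfree : Free h T) (hTpos : ∀ y ∈ T, 0 < y) :
    PropertyP (symSet T) h := by
  intro D ⟨s, hs⟩
  refine ⟨red s, ⟨?_, ?_⟩, ?_⟩
  · -- IsCore
    obtain ⟨hs1, hs2, hs3⟩ := hs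
    obtain ⟨p, hp1, hp2⟩ := matches_red hTpos hs2
    have hcard : Multiset.card s = Multiset.card (red s) + 2 * Multiset.card p := by
      conv_lhs => rw [hp2]
      rw [Multiset.card_add, Multiset.card_add, Multiset.card_map]; ring
    refine ⟨by omega, by omega, ?_, ?_⟩
    · intro x hx
      have : red s ≤ s := tsub_le_self
      exact hs2 x (Multiset.mem_of_le this hx)
    · intro x hx hcon
      have hx0 : x ≠ 0 := by
        intro hx0; subst hx0
        have := count_red s 0
        rw [neg_zero] at this
        rw [← Multiset.count_pos, this] at hx
        omega
      rw [← Multiset.count_pos, Multiset.count_erase_of_ne (by omega)] at hcon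
      rw [← Multiset.count_pos] at hx
      rw [count_red] at hx hcon
      rw [neg_neg] at hcon
      omega
  · -- all reps match
    intro t ht
    have : red s = red t := rep_red_eq hfree hs ht
    rw [this]
    exact matches_red hTpos ht.2.1
  · -- uniqueness
    intro c ⟨hcore, hall⟩
    exact core_eq_red hTpos hcore (hall s hs)

end Main

variable (h : ℕ)

def T (h : ℕ) : Set ℤ := {z | ∃ N, z ∈ B h N}

lemma T_pos : ∀ y ∈ T h, 0 < y := fun y ⟨N, hy⟩ => (inv h N).2 y hy

lemma a_mem_T (n : ℕ) : a h n ∈ T h := ⟨n + 1, a_mem_B_succ h n⟩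

lemma free_T : Free h (T h) := by
  intro m hc hmem hsum
  have : ∃ N, ∀ x ∈ m, x ∈ (B h N : Set ℤ) ∨ -x ∈ (B h N : Set ℤ) := by
    clear hc hsum
    induction m using Multiset.induction with
    | empty => exact ⟨0, by simp⟩
    | cons y t ih =>
      obtain ⟨N, hN⟩ := ih fun x hx => hmem x (Multiset.mem_cons_of_mem hx)
      obtain ⟨M, hM⟩ : ∃ M, y ∈ B h M ∨ -y ∈ B h M := by
        rcases hmem y (Multiset.mem_cons_self y t) with ⟨M, hM⟩ | ⟨M, hM⟩
        · exact ⟨M, Or.inl hM⟩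
        · exact ⟨M, Or.inr hM⟩
      refine ⟨max N M, fun x hx => ?_⟩
      rcases Multiset.mem_cons.mp hx with rfl | hx
      · exact hM.imp (fun hh => B_mono h (le_max_right N M) hh)
          (fun hh => B_mono h (le_max_right N M) hh)
      · exact (hN x hx).imp (fun hh => B_mono h (le_max_left N M) hh)
          (fun hh => B_mono h (le_max_left N M) hh)
  obtain ⟨N, hN⟩ := this
  exact (inv h N).1 m hc hN hsum

lemma a_ge (n : ℕ) : (n : ℤ) + 1 ≤ a h n := by
  induction n with
  | zero => rw [a_zero]; norm_num
  | succ n ih =>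
    have h2 : a h n < a h (n + 1) := a_strict h (by omega)
    push_cast
    omega

lemma a_le_poly (hh1 : 1 ≤ h) (n : ℕ) : a h n ≤ (((4 * h + 2) * (2 * (n + 1)) ^ (2 * h - 1) : ℕ) : ℤ) := by
  have h1 := a_bound h n
  have hn0 : (0:ℤ) ≤ (n:ℤ) := Int.ofNat_nonneg n
  have hb2 : ((n:ℤ) + 1) ≤ (2 * ((n:ℤ) + 1)) ^ (2 * h - 1) := by
    calc ((n:ℤ) + 1) ≤ 2 * ((n:ℤ) + 1) := by linarith
      _ ≤ (2 * ((n:ℤ) + 1)) ^ (2 * h - 1) := le_self_pow₀ (by linarith) (by omega : 2 * h - 1 ≠ 0)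
  have hb3 : (2 * (n:ℤ) + 1) ^ (2 * h - 1) ≤ (2 * ((n:ℤ) + 1)) ^ (2 * h - 1) :=
    pow_le_pow_left₀ (by linarith) (by linarith) _
  have hb4 : (4 * (h:ℤ) + 1) * (2 * (n:ℤ) + 1) ^ (2 * h - 1)
      ≤ (4 * (h:ℤ) + 1) * (2 * ((n:ℤ) + 1)) ^ (2 * h - 1) :=
    mul_le_mul_of_nonneg_left hb3 (by positivity)
  push_cast
  linarith

end S16

/-- There exists an infinite symmetric P(h)-set whose counting function grows at least
like x^(1/(2h-1)). -/
theorem statement16 (h : ℕ) (hh : 2 ≤ h) :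
    ∃ A : Set ℤ, A.Infinite ∧ A = -A ∧ PropertyP A h ∧
      ∃ c : ℝ, 0 < c ∧ ∀ x : ℕ, 1 ≤ x →
        c * (x : ℝ) ^ ((1 : ℝ) / (2 * (h : ℝ) - 1)) ≤
          ((A ∩ Set.Icc (-(x : ℤ)) (x : ℤ)).ncard : ℝ) := by
  classical
  set K : ℕ := 2 * h - 1 with hK
  set Dc : ℕ := (4 * h + 2) * 4 ^ K with hDc
  have hDc1 : 1 ≤ Dc := by rw [hDc]; exact Nat.one_le_iff_ne_zero.mpr (by positivity)
  set A : Set ℤ := S16.symSet (S16.T h) with hA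
  refine ⟨A, ?_, ?_, ?_, (Dc : ℝ)⁻¹, inv_pos.mpr (by exact_mod_cast hDc1), ?_⟩
  · -- Infinite
    apply Set.infinite_of_injective_forall_mem (f := fun n : ℕ => S16.a h n)
      (S16.a_strict h).injective
    intro n
    exact Or.inl (S16.a_mem_T h n)
  · -- symmetric
    ext x
    rw [Set.mem_neg]
    exact ⟨fun hx => S16.symSet_neg hx, fun hx => by simpa using S16.symSet_neg hx⟩
  · exact S16.propertyP_of_free (S16.free_T h) (S16.T_pos h)
  · intro x hx
    -- find greatest n with a h n ≤ x
    set F : Finset ℕ := (Finset.range x).filter (fun k => S16.a h k ≤ (x : ℤ)) with hF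
    have hF0 : 0 ∈ F := by
      rw [hF, Finset.mem_filter, Finset.mem_range]
      refine ⟨by omega, ?_⟩
      rw [S16.a_zero]
      exact_mod_cast hx
    have hFne : F.Nonempty := ⟨0, hF0⟩
    set n : ℕ := F.max' hFne with hn
    have hnF : n ∈ F := F.max'_mem hFne
    have hax : S16.a h n ≤ (x : ℤ) := by
      rw [hF, Finset.mem_filter] at hnF; exact hnF.2
    have hxlt : (x : ℤ) < S16.a h (n + 1) := by
      by_contra hcon
      push_neg at hcon
      have hn1 : n + 1 < x := by
        have := S16.a_ge h (n + 1)
        omega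
      have : n + 1 ∈ F := by
        rw [hF, Finset.mem_filter, Finset.mem_range]; exact ⟨hn1, hcon⟩
      have := F.le_max' _ this
      omega
    -- lower bound on ncard
    have hsub : ↑((Finset.range (n + 1)).image (S16.a h)) ⊆ A ∩ Set.Icc (-(x : ℤ)) (x : ℤ) := by
      intro z hz
      simp only [Finset.coe_image, Set.mem_image, Finset.mem_coe, Finset.mem_range] at hz
      obtain ⟨k, hk, rfl⟩ := hz
      refine ⟨Or.inl (S16.a_mem_T h k), ?_, ?_⟩
      · have := S16.a_pos h k
        have : (0:ℤ) ≤ (x:ℤ) := by positivity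
        omega
      · have : S16.a h k ≤ S16.a h n := (S16.a_strict h).monotone (by omega)
        omega
    have hfin : (A ∩ Set.Icc (-(x : ℤ)) (x : ℤ)).Finite :=
      (Set.finite_Icc _ _).subset Set.inter_subset_right
    have hncard : n + 1 ≤ (A ∩ Set.Icc (-(x : ℤ)) (x : ℤ)).ncard := by
      have h1 := Set.ncard_le_ncard hsub hfin
      rw [Set.ncard_coe_finset,
        Finset.card_image_of_injective _ (S16.a_strict h).injective, Finset.card_range] at h1
      exact h1
    -- arithmetic: x < Dc * (n+1)^K ≤ (Dc * (n+1))^K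
    have hxb : (x : ℤ) < ((Dc * (n + 1)) ^ K : ℕ) := by
      calc (x : ℤ) < S16.a h (n + 1) := hxlt
        _ ≤ (((4 * h + 2) * (2 * (n + 2)) ^ K : ℕ) : ℤ) := S16.a_le_poly h (by omega) (n + 1)
        _ ≤ (((Dc * (n + 1)) ^ K : ℕ) : ℤ) := by
            have : (4 * h + 2) * (2 * (n + 2)) ^ K ≤ (Dc * (n + 1)) ^ K := by
              calc (4 * h + 2) * (2 * (n + 2)) ^ K ≤ (4 * h + 2) * (4 * (n + 1)) ^ K :=
                    Nat.mul_le_mul_left _ (Nat.pow_le_pow_left (by omega) _)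
                _ = (4 * h + 2) * (4 ^ K * (n + 1) ^ K) := by rw [Nat.mul_pow]
                _ = Dc * (n + 1) ^ K := by rw [hDc]; ring
                _ ≤ Dc ^ K * (n + 1) ^ K := by
                    have hK1 : 1 ≤ K := by omega
                    exact Nat.mul_le_mul_right _ (Nat.le_self_pow (by omega) _)
                _ = (Dc * (n + 1)) ^ K := (Nat.mul_pow _ _ _).symm
            exact_mod_cast this
    -- real power inequality
    have he : (0:ℝ) ≤ (1 : ℝ) / (2 * (h : ℝ) - 1) := by
      have : (3:ℝ) ≤ 2 * (h:ℝ) - 1 := by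
        have : (2:ℝ) ≤ (h:ℝ) := by exact_mod_cast hh
        linarith
      positivity
    have hKe : ((K : ℕ) : ℝ) * ((1 : ℝ) / (2 * (h : ℝ) - 1)) = 1 := by
      have hKr : ((K : ℕ) : ℝ) = 2 * (h : ℝ) - 1 := by
        rw [hK]
        push_cast [Nat.cast_sub (by omega : 1 ≤ 2 * h)]
        ring
      have hne : (2 * (h:ℝ) - 1) ≠ 0 := by
        have : (2:ℝ) ≤ (h:ℝ) := by exact_mod_cast hh
        intro hc; nlinarith
      rw [hKr, mul_one_div, div_self hne]
    set e : ℝ := (1 : ℝ) / (2 * (h : ℝ) - 1) with hee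
    set b : ℝ := ((Dc * (n + 1) : ℕ) : ℝ) with hb
    have hb0 : (0:ℝ) ≤ b := Nat.cast_nonneg _
    have hxb' : (x : ℝ) ≤ b ^ K := by
      have : (x : ℤ) ≤ ((Dc * (n + 1)) ^ K : ℕ) := le_of_lt hxb
      calc (x:ℝ) ≤ (((Dc * (n + 1)) ^ K : ℕ) : ℝ) := by exact_mod_cast this
        _ = b ^ K := by rw [hb]; push_cast; ring
    have hre : (x : ℝ) ^ e ≤ b := by
      calc (x : ℝ) ^ e ≤ (b ^ K) ^ e := Real.rpow_le_rpow (Nat.cast_nonneg x) hxb' he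
        _ = (b ^ ((K : ℕ) : ℝ)) ^ e := by rw [Real.rpow_natCast]
        _ = b ^ (((K : ℕ) : ℝ) * e) := by rw [← Real.rpow_mul hb0]
        _ = b ^ (1:ℝ) := by rw [hKe]
        _ = b := Real.rpow_one b
    have hfinal : ((Dc:ℝ))⁻¹ * (x:ℝ) ^ e ≤ (n + 1 : ℝ) := by
      have hDcpos : (0:ℝ) < (Dc:ℝ) := by exact_mod_cast hDc1
      rw [inv_mul_le_iff₀ hDcpos]
      calc (x:ℝ) ^ e ≤ b := hre
        _ = (Dc : ℝ) * (n + 1 : ℝ) := by rw [hb]; push_cast; ring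
    calc (Dc:ℝ)⁻¹ * (x:ℝ) ^ e ≤ (n + 1 : ℝ) := hfinal
      _ ≤ ((A ∩ Set.Icc (-(x : ℤ)) (x : ℤ)).ncard : ℝ) := by exact_mod_cast hncard
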